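/- Let n, r ≥ 1 be integers and α_1, ..., α_{r+1} positive reals with ∑ α_i = n, and let Q(x) = Γ(xn + 1)/∏_{i=1}^{r+1} Γ(x α_i + 1). If 0 < x_1 ≤ x_3 and x_2 > 0, then Q(x_1 + x_2) Q(x_3) ≤ Q(x_1) Q(x_2 + x_3), with equality if and only if x_1 = x_3. -/

import Mathlib

open Real Filter Finset Nat Topology

section chi
variable (p b q : ℝ)

noncomputable def chi (m : ℝ) : ℝ := Real.log (1 + b*(q-p) / ((p+m)*(b+q+m)))

variable {p b q} (hp : 0 < p) (hb : 0 < b) (hpq : p ≤ q)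
include hp hb hpq

lemma den_pos {m : ℝ} (hm : 0 ≤ m) : 0 < (p+m)*(b+q+m) := by nlinarith

lemma inner_ge_one {m : ℝ} (hm : 0 ≤ m) : 1 ≤ 1 + b*(q-p) / ((p+m)*(b+q+m)) := by
  have h := den_pos hp hb hpq hm
  have : 0 ≤ b*(q-p) / ((p+m)*(b+q+m)) := by
    apply div_nonneg _ h.le
    nlinarith
  linarith

lemma inner_pos {m : ℝ} (hm : 0 ≤ m) : 0 < 1 + b*(q-p) / ((p+m)*(b+q+m)) :=
  lt_of_lt_of_le one_pos (inner_ge_one hp hb hpq hm)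

lemma chi_nonneg {m : ℝ} (hm : 0 ≤ m) : 0 ≤ chi p b q m :=
  Real.log_nonneg (inner_ge_one hp hb hpq hm)

lemma chi_anti {m m' : ℝ} (hm : 0 ≤ m) (h : m ≤ m') : chi p b q m' ≤ chi p b q m := by
  have hm' : (0:ℝ) ≤ m' := le_trans hm h
  apply Real.log_le_log (inner_pos hp hb hpq hm')
  have h1 := den_pos hp hb hpq hm
  have h2 := den_pos hp hb hpq hm'
  have hc : 0 ≤ b*(q-p) := by nlinarith
  have : b*(q-p) / ((p+m')*(b+q+m')) ≤ b*(q-p) / ((p+m)*(b+q+m)) := by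
    apply div_le_div_of_nonneg_left hc h1
    nlinarith
  linarith

lemma chi_strict_anti (hlt : p < q) {m m' : ℝ} (hm : 0 ≤ m) (h : m < m') :
    chi p b q m' < chi p b q m := by
  have hm' : (0:ℝ) ≤ m' := le_trans hm h.le
  apply Real.log_lt_log (inner_pos hp hb hpq hm')
  have h1 := den_pos hp hb hpq hm
  have h2 := den_pos hp hb hpq hm'
  have hc : 0 < b*(q-p) := by nlinarith
  have : b*(q-p) / ((p+m')*(b+q+m')) < b*(q-p) / ((p+m)*(b+q+m)) := by
    apply div_lt_div_of_pos_left hc h1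
    nlinarith
  linarith

lemma chi_le {m : ℝ} (hm : 0 < m) : chi p b q m ≤ b*(q-p) / m^2 := by
  have h1 := den_pos hp hb hpq hm.le
  have hc : 0 ≤ b*(q-p) := by nlinarith
  calc chi p b q m ≤ (1 + b*(q-p) / ((p+m)*(b+q+m))) - 1 :=
        Real.log_le_sub_one_of_pos (inner_pos hp hb hpq hm.le)
    _ = b*(q-p) / ((p+m)*(b+q+m)) := by ring
    _ ≤ b*(q-p) / m^2 := by
        apply div_le_div_of_nonneg_left hc (by positivity)
        nlinarith

lemma chi_log_form {m : ℝ} (hm : 0 < m) :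
    chi p b q m = (Real.log (p+b+m) + Real.log (q+m)) - (Real.log (p+m) + Real.log (b+q+m)) := by
  have h1 := den_pos hp hb hpq hm.le
  have key : (p+b+m)*(q+m) = ((p+m)*(b+q+m)) * (1 + b*(q-p) / ((p+m)*(b+q+m))) := by
    rw [mul_add ((p+m)*(b+q+m)), mul_one, mul_div_assoc', mul_div_cancel_left₀ _ h1.ne']; ring
  have h2 : (0:ℝ) < p + b + m := by linarith
  have h3 : (0:ℝ) < q + m := by linarith
  have h4 : (0:ℝ) < p + m := by linarith
  have h5 : (0:ℝ) < b + q + m := by linarith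
  have := congrArg Real.log key
  rw [Real.log_mul (by positivity) (ne_of_gt (inner_pos hp hb hpq hm.le)),
      Real.log_mul h2.ne' h3.ne', Real.log_mul h4.ne' h5.ne'] at this
  unfold chi
  linarith

end chi

noncomputable def Sfun (p b q a : ℝ) : ℝ := ∑' k : ℕ, chi p b q ((1+k)/a)

section S
variable {p b q : ℝ} (hp : 0 < p) (hb : 0 < b) (hpq : p ≤ q)
include hp hb hpq

lemma summable_chi {a : ℝ} (ha : 0 < a) : Summable (fun k : ℕ => chi p b q ((1+k)/a)) := by
  have hbase : Summable (fun k : ℕ => b*(q-p)*a^2 * (1/((k:ℝ)+1)^2)) := by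
    apply Summable.mul_left
    exact_mod_cast (summable_nat_add_iff 1).mpr (Real.summable_one_div_nat_pow.mpr one_lt_two)
  apply Summable.of_nonneg_of_le _ _ hbase
  · intro k
    apply chi_nonneg hp hb hpq
    positivity
  · intro k
    have hk : (0:ℝ) < (1+k)/a := by positivity
    calc chi p b q ((1+k)/a) ≤ b*(q-p) / ((1+k)/a)^2 := chi_le hp hb hpq hk
      _ = b*(q-p)*a^2 * (1/((k:ℝ)+1)^2) := by
          rw [div_pow, div_div_eq_mul_div]
          rw [div_eq_mul_one_div]
          ring_nf

lemma Sfun_superadd_aux {u v : ℝ} (hu : 0 < u) (hv : 0 < v) (huv : u ≤ v) :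
    Sfun p b q u + Sfun p b q v ≤ Sfun p b q (u+v) + (chi p b q (1/v) - chi p b q (1/(u+v))) := by
  have huv0 : (0:ℝ) < u + v := by linarith
  set β := (u+v)/u with hβdef
  set γ := (u+v)/v with hγdef
  have hβ : (2:ℝ) ≤ β := by rw [hβdef, le_div_iff₀ hu]; linarith
  have hγ : (1:ℝ) < γ := by rw [hγdef, lt_div_iff₀ hv]; linarith
  have hβ0 : (0:ℝ) < β := by linarith
  have hγ0 : (0:ℝ) < γ := by linarith
  set g : ℕ → ℝ := fun m => chi p b q (((m:ℝ)+2)/(u+v)) with hgdef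
  set ι₁ : ℕ → ℕ := fun k => ⌊((k+1:ℕ):ℝ)*β⌋₊ - 2 with hι₁def
  set ι₂ : ℕ → ℕ := fun j => ⌈((j+2:ℕ):ℝ)*γ⌉₊ - 3 with hι₂def
  have hF1 : ∀ k : ℕ, 2 ≤ ⌊((k+1:ℕ):ℝ)*β⌋₊ := by
    intro k
    apply Nat.le_floor
    have h0 : (1:ℝ) ≤ ((k+1:ℕ):ℝ) := by exact_mod_cast Nat.one_le_iff_ne_zero.mpr (Nat.succ_ne_zero k)
    push_cast
    nlinarith
  have hF2 : ∀ j : ℕ, 3 ≤ ⌈((j+2:ℕ):ℝ)*γ⌉₊ := by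
    intro j
    have h0 : (2:ℝ) ≤ ((j+2:ℕ):ℝ) := by exact_mod_cast Nat.le_add_left 2 j
    have : ((2:ℕ):ℝ) < ((j+2:ℕ):ℝ)*γ := by push_cast at h0 ⊢; nlinarith
    have := Nat.lt_ceil.mpr this
    omega
  have cast1 : ∀ k : ℕ, ((ι₁ k : ℕ):ℝ) + 2 = (⌊((k+1:ℕ):ℝ)*β⌋₊ : ℝ) := by
    intro k
    have h := hF1 k
    simp only [hι₁def]
    rw [Nat.cast_sub h]
    norm_num
  have cast2 : ∀ j : ℕ, ((ι₂ j : ℕ):ℝ) + 2 = (⌈((j+2:ℕ):ℝ)*γ⌉₊ : ℝ) - 1 := by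
    intro j
    have h := hF2 j
    simp only [hι₂def]
    rw [Nat.cast_sub h]
    push_cast
    ring
  have hι₁inj : Function.Injective ι₁ := by
    have hmono : StrictMono ι₁ := by
      apply strictMono_nat_of_lt_succ
      intro k
      have h1 := hF1 k
      have hfl : (⌊((k+1:ℕ):ℝ)*β⌋₊:ℝ) ≤ ((k+1:ℕ):ℝ)*β := Nat.floor_le (by positivity)
      have hstep : ⌊((k+1:ℕ):ℝ)*β⌋₊ + 2 ≤ ⌊((k+1+1:ℕ):ℝ)*β⌋₊ := by
        apply Nat.le_floor
        push_cast at hfl ⊢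
        nlinarith
      simp only [hι₁def]
      omega
    exact hmono.injective
  have hι₂inj : Function.Injective ι₂ := by
    have hmono : StrictMono ι₂ := by
      apply strictMono_nat_of_lt_succ
      intro j
      have h1 := hF2 j
      have h2 : (⌈((j+2:ℕ):ℝ)*γ⌉₊:ℝ) < ((j+2:ℕ):ℝ)*γ + 1 := Nat.ceil_lt_add_one (by positivity)
      have hstep : ⌈((j+2:ℕ):ℝ)*γ⌉₊ + 1 ≤ ⌈((j+1+2:ℕ):ℝ)*γ⌉₊ := by
        apply Nat.lt_ceil.mpr
        push_cast at h2 ⊢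
        nlinarith
      simp only [hι₂def]
      omega
    exact hmono.injective
  have hdisj : Disjoint (Set.range ι₁) (Set.range ι₂) := by
    rw [Set.disjoint_left]
    rintro m ⟨k, hk⟩ ⟨j, hj⟩
    have hnat : ⌈((j+2:ℕ):ℝ)*γ⌉₊ = ⌊((k+1:ℕ):ℝ)*β⌋₊ + 1 := by
      have h1 := hF1 k
      have h2 := hF2 j
      simp only [hι₁def] at hk
      simp only [hι₂def] at hj
      omega
    set M := ⌊((k+1:ℕ):ℝ)*β⌋₊ with hMdef
    have hMle : (M:ℝ) ≤ ((k+1:ℕ):ℝ)*β := Nat.floor_le (by positivity)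
    have hMlt : ((k+1:ℕ):ℝ)*β < (M:ℝ) + 1 := Nat.lt_floor_add_one _
    have hJle : ((j+2:ℕ):ℝ)*γ ≤ (M:ℝ) + 1 := by
      have := Nat.ceil_le.mp (le_of_eq hnat)
      push_cast at this ⊢
      linarith
    have hJgt : (M:ℝ) < ((j+2:ℕ):ℝ)*γ := by
      apply Nat.lt_ceil.mp
      omega
    have hβu : β * u = u + v := by rw [hβdef]; field_simp
    have hγv : γ * v = u + v := by rw [hγdef]; field_simp
    have key1 : (M:ℝ) < ((k+1:ℕ):ℝ) + ((j+2:ℕ):ℝ) := by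
      have e1 : ((k+1:ℕ):ℝ)*β*u = ((k+1:ℕ):ℝ)*(u+v) := by rw [mul_assoc, hβu]
      have e2 : ((j+2:ℕ):ℝ)*γ*v = ((j+2:ℕ):ℝ)*(u+v) := by rw [mul_assoc, hγv]
      nlinarith [mul_le_mul_of_nonneg_right hMle hu.le, mul_lt_mul_of_pos_right hJgt hv]
    have key2 : ((k+1:ℕ):ℝ) + ((j+2:ℕ):ℝ) < (M:ℝ) + 1 := by
      have e1 : ((k+1:ℕ):ℝ)*β*u = ((k+1:ℕ):ℝ)*(u+v) := by rw [mul_assoc, hβu]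
      have e2 : ((j+2:ℕ):ℝ)*γ*v = ((j+2:ℕ):ℝ)*(u+v) := by rw [mul_assoc, hγv]
      nlinarith [mul_lt_mul_of_pos_right hMlt hu, mul_le_mul_of_nonneg_right hJle hv.le]
    have c1 : M < k+1+(j+2) := by exact_mod_cast key1
    have c2 : k+1+(j+2) < M + 1 := by exact_mod_cast key2
    omega
  -- summability
  have hgsum : Summable g := by
    have h0 := summable_chi hp hb hpq huv0
    have h1 := (summable_nat_add_iff 1).mpr h0
    refine h1.congr (fun m => ?_)
    simp only [hgdef]
    congr 1
    push_cast
    ring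
  have hβu : β * u = u + v := by rw [hβdef]; field_simp
  have hγv : γ * v = u + v := by rw [hγdef]; field_simp
  have dom1 : ∀ k : ℕ, chi p b q ((1+(k:ℝ))/u) ≤ g (ι₁ k) := by
    intro k
    simp only [hgdef]
    rw [cast1 k]
    have hfl : (⌊((k+1:ℕ):ℝ)*β⌋₊:ℝ) ≤ ((k+1:ℕ):ℝ)*β := Nat.floor_le (by positivity)
    apply chi_anti hp hb hpq (by positivity)
    rw [div_le_div_iff₀ huv0 hu]
    push_cast at hfl ⊢
    nlinarith
  have dom2 : ∀ j : ℕ, chi p b q ((1+((j+1:ℕ):ℝ))/v) ≤ g (ι₂ j) := by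
    intro j
    simp only [hgdef]
    rw [cast2 j]
    have h3 := hF2 j
    have h3' : (3:ℝ) ≤ (⌈((j+2:ℕ):ℝ)*γ⌉₊:ℝ) := by exact_mod_cast h3
    have hcl : (⌈((j+2:ℕ):ℝ)*γ⌉₊:ℝ) < ((j+2:ℕ):ℝ)*γ + 1 := Nat.ceil_lt_add_one (by positivity)
    apply chi_anti hp hb hpq
    · apply div_nonneg _ huv0.le
      linarith
    · rw [div_le_div_iff₀ huv0 hv]
      push_cast at hcl h3' ⊢
      nlinarith
  have hsum_u := summable_chi hp hb hpq hu
  have hsum_v := summable_chi hp hb hpq hv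
  have hsum_v' := (summable_nat_add_iff 1).mpr hsum_v
  have hg1 : Summable (fun k => g (ι₁ k)) := hgsum.comp_injective hι₁inj
  have hg2 : Summable (fun j => g (ι₂ j)) := hgsum.comp_injective hι₂inj
  have h1 : ∑' k : ℕ, chi p b q ((1+(k:ℝ))/u) ≤ ∑' k, g (ι₁ k) :=
    Summable.tsum_le_tsum dom1 hsum_u hg1
  have h2 : ∑' j : ℕ, chi p b q ((1+((j+1:ℕ):ℝ))/v) ≤ ∑' j, g (ι₂ j) :=
    Summable.tsum_le_tsum dom2 hsum_v' hg2
  have hr1 : ∑' k, g (ι₁ k) = ∑' (m : Set.range ι₁), g m := (tsum_range g hι₁inj).symm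
  have hr2 : ∑' j, g (ι₂ j) = ∑' (m : Set.range ι₂), g m := (tsum_range g hι₂inj).symm
  have hA : Summable ((fun m => g m) ∘ ((↑) : (Set.range ι₁) → ℕ)) := hgsum.subtype _
  have hB : Summable ((fun m => g m) ∘ ((↑) : (Set.range ι₂) → ℕ)) := hgsum.subtype _
  have hunion : (∑' (m : Set.range ι₁), g m) + (∑' (m : Set.range ι₂), g m)
      = ∑' (x : ↑(Set.range ι₁ ∪ Set.range ι₂)), g x := (Summable.tsum_union_disjoint hdisj hA hB).symm
  have hgnonneg : ∀ m : ℕ, 0 ≤ g m := by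
    intro m
    simp only [hgdef]
    exact chi_nonneg hp hb hpq (by positivity)
  have hsub : (∑' (x : ↑(Set.range ι₁ ∪ Set.range ι₂)), g x) ≤ ∑' m, g m :=
    Summable.tsum_subtype_le g _ hgnonneg hgsum
  have hSv : Sfun p b q v = chi p b q (1/v) + ∑' j : ℕ, chi p b q ((1+((j+1:ℕ):ℝ))/v) := by
    rw [Sfun, Summable.tsum_eq_zero_add hsum_v]
    norm_num
  have hSuv : Sfun p b q (u+v) = chi p b q (1/(u+v)) + ∑' m, g m := by
    rw [Sfun, Summable.tsum_eq_zero_add (summable_chi hp hb hpq huv0)]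
    congr 1
    · norm_num
    · refine tsum_congr (fun m => ?_)
      simp only [hgdef]
      congr 1
      push_cast
      ring
  have hSu : Sfun p b q u = ∑' k : ℕ, chi p b q ((1+(k:ℝ))/u) := rfl
  linarith

end S

section S2
variable {p b q : ℝ} (hp : 0 < p) (hb : 0 < b) (hlt : p < q)
include hp hb hlt

lemma chi_strict_anti' {m m' : ℝ} (hm : 0 ≤ m) (h : m < m') : chi p b q m' < chi p b q m :=
  chi_strict_anti hp hb hlt.le hlt hm h

lemma Sfun_superadd {u v : ℝ} (hu : 0 < u) (hv : 0 < v) :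
    Sfun p b q u + Sfun p b q v < Sfun p b q (u+v) := by
  have hpq : p ≤ q := hlt.le
  rcases le_total u v with huv | hvu
  · have haux := Sfun_superadd_aux hp hb hpq hu hv huv
    have h1 : 1/(u+v) < 1/v := by
      apply one_div_lt_one_div_of_lt hv
      linarith
    have h2 : chi p b q (1/v) < chi p b q (1/(u+v)) :=
      chi_strict_anti' hp hb hlt (by positivity) h1
    linarith
  · have haux := Sfun_superadd_aux hp hb hpq hv hu hvu
    have h1 : 1/(v+u) < 1/u := by
      apply one_div_lt_one_div_of_lt hu
      linarith
    have h2 : chi p b q (1/u) < chi p b q (1/(v+u)) :=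
      chi_strict_anti' hp hb hlt (by positivity) h1
    have : v + u = u + v := add_comm v u
    rw [this] at haux h2
    linarith

lemma Sfun_sum_le {ι : Type*} (s : Finset ι) (w : ι → ℝ) (hw : ∀ i ∈ s, 0 < w i)
    (hs : s.Nonempty) : ∑ i ∈ s, Sfun p b q (w i) ≤ Sfun p b q (∑ i ∈ s, w i) := by
  induction hs using Finset.Nonempty.cons_induction with
  | singleton a => simp
  | cons a s ha hs ih =>
    rw [Finset.sum_cons, Finset.sum_cons]
    have hws : 0 < ∑ i ∈ s, w i :=
      Finset.sum_pos (fun i hi => hw i (Finset.mem_cons_of_mem hi)) hs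
    have hwa : 0 < w a := hw a (Finset.mem_cons_self a _)
    have hih := ih (fun i hi => hw i (Finset.mem_cons_of_mem hi))
    have := (Sfun_superadd hp hb hlt hwa hws).le
    linarith

lemma Sfun_sum_lt {ι : Type*} [DecidableEq ι] (s : Finset ι) (w : ι → ℝ) (hw : ∀ i ∈ s, 0 < w i)
    (hcard : 2 ≤ s.card) : ∑ i ∈ s, Sfun p b q (w i) < Sfun p b q (∑ i ∈ s, w i) := by
  obtain ⟨a, ha⟩ : s.Nonempty := Finset.card_pos.mp (by omega)
  have htne : (s.erase a).Nonempty := by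
    rw [← Finset.card_pos, Finset.card_erase_of_mem ha]
    omega
  have hwa : 0 < w a := hw a ha
  have hwt : ∀ i ∈ s.erase a, 0 < w i := fun i hi => hw i (Finset.mem_of_mem_erase hi)
  have hts : 0 < ∑ i ∈ s.erase a, w i := Finset.sum_pos hwt htne
  have h1 : ∑ i ∈ s.erase a, Sfun p b q (w i) ≤ Sfun p b q (∑ i ∈ s.erase a, w i) :=
    Sfun_sum_le hp hb hlt _ _ hwt htne
  have h2 := Sfun_superadd hp hb hlt hwa hts
  rw [← Finset.add_sum_erase s w ha, ← Finset.add_sum_erase s (fun i => Sfun p b q (w i)) ha]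
  linarith

end S2

noncomputable def Dprod (s : ℝ) (N : ℕ) : ℝ := ∏ k ∈ Finset.range (N+1), (s + k)

lemma Dprod_pos {s : ℝ} (hs : 0 < s) (N : ℕ) : 0 < Dprod s N := by
  apply Finset.prod_pos
  intro k _
  have : (0:ℝ) ≤ k := Nat.cast_nonneg k
  linarith

section main
variable {n r : ℕ} {α : Fin (r+1) → ℝ}

lemma GS_eq (s : ℝ) (N : ℕ) :
    Real.GammaSeq s N = (N:ℝ)^s * (N ! : ℝ) / Dprod s N := rfl

-- F N x = K N * (∏ i, Dprod (x*α i+1) N) / Dprod (x*n+1) N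
lemma F_eq (hn : 1 ≤ n) (hα : ∀ i, 0 < α i) (hsum : ∑ i, α i = n)
    {N : ℕ} (hN : 1 ≤ N) {x : ℝ} (hx : 0 < x) :
    Real.GammaSeq (x*n+1) N / ∏ i, Real.GammaSeq (x*α i+1) N
      = (Real.exp (-(r:ℝ) * Real.log N) * ((N ! : ℝ))^(-(r:ℤ)))
        * (∏ i, Dprod (x*α i+1) N) / Dprod (x*n+1) N := by
  have hN0 : (0:ℝ) < N := by exact_mod_cast hN
  have hNfac : (0:ℝ) < (N ! : ℝ) := by exact_mod_cast Nat.factorial_pos N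
  have hn0 : (0:ℝ) < n := by exact_mod_cast hn
  have hDn : 0 < Dprod (x*n+1) N := Dprod_pos (by positivity) N
  have hDi : ∀ i : Fin (r+1), 0 < Dprod (x*α i+1) N := fun i => Dprod_pos (by have := hα i; positivity) N
  set L := Real.log N with hL
  have hrpow : ∀ s : ℝ, (N:ℝ)^s = Real.exp (s * L) := by
    intro s
    rw [Real.rpow_def_of_pos hN0, hL, mul_comm]
  have hsum' : ∑ i : Fin (r+1), (x * α i + 1) = x*n + (r+1) := by
    rw [Finset.sum_add_distrib, ← Finset.mul_sum, hsum]
    simp [Finset.card_univ]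
  have hprodpow : ∏ i : Fin (r+1), (N:ℝ)^(x*α i+1) = Real.exp ((x*n + (r+1)) * L) := by
    calc ∏ i : Fin (r+1), (N:ℝ)^(x*α i+1) = ∏ i : Fin (r+1), Real.exp ((x*α i+1) * L) := by
          exact Finset.prod_congr rfl (fun i _ => hrpow _)
      _ = Real.exp (∑ i : Fin (r+1), (x*α i+1) * L) := by rw [Real.exp_sum]
      _ = Real.exp ((x*n + (r+1)) * L) := by rw [← Finset.sum_mul, hsum']
  have hden : ∏ i, Real.GammaSeq (x*α i+1) N
      = Real.exp ((x*n + (r+1)) * L) * (N ! : ℝ)^(r+1) / ∏ i, Dprod (x*α i+1) N := by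
    simp only [GS_eq]
    rw [Finset.prod_div_distrib, Finset.prod_mul_distrib, Finset.prod_const, hprodpow]
    simp [Finset.card_univ]
  rw [hden, GS_eq, hrpow]
  have hDiprod : 0 < ∏ i, Dprod (x*α i+1) N := Finset.prod_pos (fun i _ => hDi i)
  have hexp1 : Real.exp ((x*↑n+1) * L) = Real.exp (-(r:ℝ) * L) * Real.exp ((x*↑n + (↑r+1)) * L) := by
    rw [← Real.exp_add]
    congr 1
    ring
  have hfac : (N ! : ℝ) = ((N ! : ℝ))^(-(r:ℤ)) * (N ! : ℝ)^(r+1) := by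
    rw [← zpow_natCast ((N ! : ℝ)) (r+1), ← zpow_add₀ hNfac.ne']
    norm_num
  rw [div_div_div_eq]
  push_cast
  rw [hexp1]
  nth_rewrite 1 [hfac]
  rw [div_eq_div_iff (by positivity) (by positivity)]
  ring

end main

noncomputable def ratio4 (x₁ x₂ x₃ a : ℝ) (k : ℕ) : ℝ :=
  (((x₁+x₂)*a+1+k)*(x₃*a+1+k)) / ((x₁*a+1+k)*((x₂+x₃)*a+1+k))

section four
variable {x₁ x₂ x₃ : ℝ} (h1 : 0 < x₁) (h2 : 0 < x₂) (h3 : 0 < x₃)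
include h1 h2 h3

lemma ratio4_pos {a : ℝ} (ha : 0 < a) (k : ℕ) : 0 < ratio4 x₁ x₂ x₃ a k := by
  unfold ratio4
  have hk : (0:ℝ) ≤ k := Nat.cast_nonneg k
  apply _root_.div_pos <;> apply mul_pos <;> nlinarith

lemma prod_ratio4 (a : ℝ) (N : ℕ) : ∏ k ∈ Finset.range (N+1), ratio4 x₁ x₂ x₃ a k =
    (Dprod ((x₁+x₂)*a+1) N * Dprod (x₃*a+1) N) / (Dprod (x₁*a+1) N * Dprod ((x₂+x₃)*a+1) N) := by
  unfold ratio4 Dprod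
  rw [Finset.prod_div_distrib, Finset.prod_mul_distrib, Finset.prod_mul_distrib]

lemma log_ratio4 (h13 : x₁ ≤ x₃) {a : ℝ} (ha : 0 < a) (k : ℕ) :
    Real.log (ratio4 x₁ x₂ x₃ a k) = chi x₁ x₂ x₃ ((1+(k:ℕ))/a) := by
  have hk : (0:ℝ) ≤ k := Nat.cast_nonneg k
  have hm : (0:ℝ) < (1+(k:ℕ))/a := by positivity
  set m : ℝ := (1+(k:ℕ))/a with hmdef
  have hma : a * m = 1 + k := by rw [hmdef]; field_simp
  have e1 : (x₁+x₂)*a+1+(k:ℕ) = a*((x₁+x₂)+m) := by rw [mul_add, hma]; ring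
  have e2 : x₃*a+1+(k:ℕ) = a*(x₃+m) := by rw [mul_add, hma]; ring
  have e3 : x₁*a+1+(k:ℕ) = a*(x₁+m) := by rw [mul_add, hma]; ring
  have e4 : (x₂+x₃)*a+1+(k:ℕ) = a*((x₂+x₃)+m) := by rw [mul_add, hma]; ring
  have hm0 : 0 < m := hm
  have p1 : (0:ℝ) < (x₁+x₂)+m := by linarith
  have p2 : (0:ℝ) < x₃+m := by linarith
  have p3 : (0:ℝ) < x₁+m := by linarith
  have p4 : (0:ℝ) < (x₂+x₃)+m := by linarith
  unfold ratio4
  rw [e1, e2, e3, e4]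
  have lmul : ∀ y z : ℝ, 0 < y → 0 < z →
      Real.log (a*y*(a*z)) = Real.log a + Real.log y + (Real.log a + Real.log z) := by
    intro y z hy hz
    rw [Real.log_mul (by positivity) (by positivity), Real.log_mul ha.ne' hy.ne',
        Real.log_mul ha.ne' hz.ne']
  rw [Real.log_div (by positivity) (by positivity), lmul _ _ p1 p2, lmul _ _ p3 p4,
      chi_log_form h1 h2 h13 hm0]
  ring
end four


theorem key {n r : ℕ} (hn : 1 ≤ n) (hr : 1 ≤ r) {α : Fin (r+1) → ℝ} (hα : ∀ i, 0 < α i)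
    (hsum : ∑ i, α i = (n:ℝ)) {x₁ x₂ x₃ : ℝ} (h1 : 0 < x₁) (hlt : x₁ < x₃) (h2 : 0 < x₂) :
    (Real.Gamma ((x₁+x₂)*n+1) / ∏ i, Real.Gamma ((x₁+x₂)*α i+1))
      * (Real.Gamma (x₃*n+1) / ∏ i, Real.Gamma (x₃*α i+1))
    < (Real.Gamma (x₁*n+1) / ∏ i, Real.Gamma (x₁*α i+1))
      * (Real.Gamma ((x₂+x₃)*n+1) / ∏ i, Real.Gamma ((x₂+x₃)*α i+1)) := by
  have h3 : 0 < x₃ := h1.trans hlt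
  have h13 : x₁ ≤ x₃ := hlt.le
  have h12 : 0 < x₁ + x₂ := by linarith
  have h23 : 0 < x₂ + x₃ := by linarith
  have hn0 : (0:ℝ) < n := by exact_mod_cast hn
  set G : ℝ → ℝ := fun x => Real.Gamma (x*n+1) / ∏ i, Real.Gamma (x*α i+1) with hGdef
  have hGpos : ∀ x : ℝ, 0 < x → 0 < G x := by
    intro x hx
    apply div_pos (Real.Gamma_pos_of_pos (by positivity))
    exact Finset.prod_pos fun i _ => Real.Gamma_pos_of_pos (by have := hα i; positivity)
  set Fseq : ℕ → ℝ → ℝ :=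
    fun N x => Real.GammaSeq (x*n+1) N / ∏ i, Real.GammaSeq (x*α i+1) N with hFdef
  have hFt : ∀ x : ℝ, 0 < x → Tendsto (fun N => Fseq N x) atTop (𝓝 (G x)) := by
    intro x hx
    apply Tendsto.div (Real.GammaSeq_tendsto_Gamma _)
      (tendsto_finset_prod _ (fun i _ => Real.GammaSeq_tendsto_Gamma _))
    exact ne_of_gt (Finset.prod_pos fun i _ => Real.Gamma_pos_of_pos (by have := hα i; positivity))
  set R : ℝ := G x₁ * G (x₂+x₃) / (G (x₁+x₂) * G x₃) with hRdef
  have hR0 : 0 < R := by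
    apply div_pos (mul_pos (hGpos _ h1) (hGpos _ h23)) (mul_pos (hGpos _ h12) (hGpos _ h3))
  have hRt : Tendsto (fun N => Fseq N x₁ * Fseq N (x₂+x₃) / (Fseq N (x₁+x₂) * Fseq N x₃))
      atTop (𝓝 R) := by
    exact Tendsto.div ((hFt _ h1).mul (hFt _ h23)) ((hFt _ h12).mul (hFt _ h3))
      (ne_of_gt (mul_pos (hGpos _ h12) (hGpos _ h3)))
  set e : ℕ → ℝ := fun k => ratio4 x₁ x₂ x₃ n k / ∏ i, ratio4 x₁ x₂ x₃ (α i) k with hedef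
  have hepos : ∀ k, 0 < e k := by
    intro k
    apply div_pos (ratio4_pos h1 h2 h3 hn0 k)
    exact Finset.prod_pos fun i _ => ratio4_pos h1 h2 h3 (hα i) k
  -- the finite product identity
  have hprod_eq : ∀ N : ℕ, 1 ≤ N →
      ∏ k ∈ Finset.range (N+1), e k
        = Fseq N x₁ * Fseq N (x₂+x₃) / (Fseq N (x₁+x₂) * Fseq N x₃) := by
    intro N hN
    have hα' : ∀ i : Fin (r+1), 0 < α i := hα
    set A : ℝ → ℝ := fun x => ∏ i, Dprod (x*α i+1) N with hAdef
    set B : ℝ → ℝ := fun x => Dprod (x*n+1) N with hBdef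
    have hApos : ∀ x : ℝ, 0 < x → 0 < A x :=
      fun x hx => Finset.prod_pos fun i _ => Dprod_pos (by have := hα i; positivity) N
    have hBpos : ∀ x : ℝ, 0 < x → 0 < B x := fun x hx => Dprod_pos (by positivity) N
    set K : ℝ := Real.exp (-(r:ℝ) * Real.log N) * ((N ! : ℝ))^(-(r:ℤ)) with hKdef
    have hK : K ≠ 0 := by
      apply mul_ne_zero (Real.exp_ne_zero _)
      apply zpow_ne_zero
      exact_mod_cast (Nat.factorial_pos N).ne'
    have hF4 : ∀ x : ℝ, 0 < x → Fseq N x = K * A x / B x := fun x hx => F_eq hn hα hsum hN hx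
    have lhsB : ∏ k ∈ Finset.range (N+1), ratio4 x₁ x₂ x₃ n k
        = (B (x₁+x₂) * B x₃) / (B x₁ * B (x₂+x₃)) := prod_ratio4 h1 h2 h3 n N
    have lhsA : ∏ k ∈ Finset.range (N+1), ∏ i, ratio4 x₁ x₂ x₃ (α i) k
        = (A (x₁+x₂) * A x₃) / (A x₁ * A (x₂+x₃)) := by
      rw [Finset.prod_comm]
      have : ∀ i : Fin (r+1), ∏ k ∈ Finset.range (N+1), ratio4 x₁ x₂ x₃ (α i) k
          = (Dprod ((x₁+x₂)*α i+1) N * Dprod (x₃*α i+1) N)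
            / (Dprod (x₁*α i+1) N * Dprod ((x₂+x₃)*α i+1) N) :=
        fun i => prod_ratio4 h1 h2 h3 (α i) N
      rw [Finset.prod_congr rfl (fun i _ => this i)]
      rw [Finset.prod_div_distrib, Finset.prod_mul_distrib, Finset.prod_mul_distrib]
    have expand : ∏ k ∈ Finset.range (N+1), e k
        = ((B (x₁+x₂) * B x₃) / (B x₁ * B (x₂+x₃)))
          / ((A (x₁+x₂) * A x₃) / (A x₁ * A (x₂+x₃))) := by
      rw [hedef]
      rw [Finset.prod_div_distrib, lhsB, lhsA]
    rw [expand, hF4 _ h1, hF4 _ h23, hF4 _ h12, hF4 _ h3]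
    have n1 := (hApos _ h1).ne'
    have n2 := (hApos _ h23).ne'
    have n3 := (hApos _ h12).ne'
    have n4 := (hApos _ h3).ne'
    have m1 := (hBpos _ h1).ne'
    have m2 := (hBpos _ h23).ne'
    have m3 := (hBpos _ h12).ne'
    have m4 := (hBpos _ h3).ne'
    field_simp
  -- logs
  have hloge : ∀ k : ℕ,
      Real.log (e k) = chi x₁ x₂ x₃ ((1+(k:ℕ))/n) - ∑ i, chi x₁ x₂ x₃ ((1+(k:ℕ))/α i) := by
    intro k
    rw [hedef]
    have hprodne : (∏ i, ratio4 x₁ x₂ x₃ (α i) k) ≠ 0 :=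
      (Finset.prod_pos fun i _ => ratio4_pos h1 h2 h3 (hα i) k).ne'
    rw [Real.log_div (ratio4_pos h1 h2 h3 hn0 k).ne' hprodne,
        log_ratio4 h1 h2 h3 h13 hn0 k,
        Real.log_prod (fun i _ => (ratio4_pos h1 h2 h3 (hα i) k).ne')]
    congr 1
    exact Finset.sum_congr rfl fun i _ => log_ratio4 h1 h2 h3 h13 (hα i) k
  set ℓ : ℕ → ℝ :=
    fun k => chi x₁ x₂ x₃ ((1+(k:ℕ))/n) - ∑ i, chi x₁ x₂ x₃ ((1+(k:ℕ))/α i) with hℓdef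
  have hsum_n := summable_chi h1 h2 h13 hn0
  have hsum_i : Summable (fun k : ℕ => ∑ i, chi x₁ x₂ x₃ ((1+(k:ℕ))/α i)) :=
    summable_sum fun i _ => summable_chi h1 h2 h13 (hα i)
  have hℓsummable : Summable ℓ := hsum_n.sub hsum_i
  set Dtot : ℝ := ∑' k, ℓ k with hDdef
  have hDval : Dtot = Sfun x₁ x₂ x₃ n - ∑ i, Sfun x₁ x₂ x₃ (α i) := by
    rw [hDdef, hℓdef]
    rw [Summable.tsum_sub hsum_n hsum_i, Summable.tsum_finsetSum (fun i _ => summable_chi h1 h2 h13 (hα i))]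
    rfl
  have hDpos : 0 < Dtot := by
    rw [hDval]
    have hcard : 2 ≤ (Finset.univ : Finset (Fin (r+1))).card := by
      rw [Finset.card_univ, Fintype.card_fin]
      omega
    have := Sfun_sum_lt h1 h2 hlt Finset.univ α (fun i _ => hα i) hcard
    rw [hsum] at this
    linarith
  have hlogt : Tendsto (fun N => ∑ k ∈ Finset.range (N+1), ℓ k) atTop (𝓝 Dtot) := by
    have h0 := hℓsummable.hasSum.tendsto_sum_nat
    exact h0.comp (tendsto_add_atTop_nat 1)
  have hlogP : Tendsto
      (fun N => Real.log (Fseq N x₁ * Fseq N (x₂+x₃) / (Fseq N (x₁+x₂) * Fseq N x₃)))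
      atTop (𝓝 Dtot) := by
    apply hlogt.congr'
    filter_upwards [eventually_ge_atTop 1] with N hN
    rw [← hprod_eq N hN, Real.log_prod (fun k _ => (hepos k).ne')]
    exact (Finset.sum_congr rfl fun k _ => (hloge k)).symm
  have hlogR : Tendsto
      (fun N => Real.log (Fseq N x₁ * Fseq N (x₂+x₃) / (Fseq N (x₁+x₂) * Fseq N x₃)))
      atTop (𝓝 (Real.log R)) := ((Real.continuousAt_log hR0.ne').tendsto).comp hRt
  have hRD : Real.log R = Dtot := tendsto_nhds_unique hlogR hlogP
  have hR1 : 1 < R := by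
    have : R = Real.exp Dtot := by rw [← hRD, Real.exp_log hR0]
    rw [this]
    calc (1:ℝ) = Real.exp 0 := Real.exp_zero.symm
      _ < Real.exp Dtot := Real.exp_lt_exp.mpr hDpos
  have := (one_lt_div (mul_pos (hGpos _ h12) (hGpos _ h3))).mp hR1
  exact this


theorem stmt18 (n r : ℕ) (hn : 1 ≤ n) (hr : 1 ≤ r)
    (α : Fin (r + 1) → ℝ) (hα : ∀ i, 0 < α i) (hsum : ∑ i, α i = n)
    (Q : ℝ → ℝ) (hQ : ∀ x, Q x = Real.Gamma (x * n + 1) / ∏ i, Real.Gamma (x * α i + 1))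
    (x₁ x₂ x₃ : ℝ) (h1 : 0 < x₁) (h13 : x₁ ≤ x₃) (h2 : 0 < x₂) :
    Q (x₁ + x₂) * Q x₃ ≤ Q x₁ * Q (x₂ + x₃) ∧
    (Q (x₁ + x₂) * Q x₃ = Q x₁ * Q (x₂ + x₃) ↔ x₁ = x₃) := by
  rcases eq_or_lt_of_le h13 with heq | hlt
  · subst heq
    have heq2 : Q (x₁ + x₂) * Q x₁ = Q x₁ * Q (x₂ + x₁) := by
      rw [add_comm x₂ x₁, mul_comm]
    exact ⟨le_of_eq heq2, ⟨fun _ => rfl, fun _ => heq2⟩⟩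
  · have hkey := key hn hr hα hsum h1 hlt h2
    rw [hQ (x₁+x₂), hQ x₃, hQ x₁, hQ (x₂+x₃)]
    exact ⟨hkey.le, ⟨fun habs => absurd habs hkey.ne, fun hx => absurd hx hlt.ne⟩⟩
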